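/- For every prime p > 3, (p-1)! ≡ p·B_{2p-2}/(2p-2) - p·B_{p-1}/(p-1) - (1/2)·(p·B_{p-1}/(p-1))^2 (mod p^3), as a congruence of p-adic integers. -/

import Mathlib

open Finset

section tools
variable (p : ℕ) [hp : Fact p.Prime]

/-- `p^{-k}` as a real number. -/
noncomputable def pw (k : ℕ) : ℝ := ((p : ℝ) ^ k)⁻¹

variable {p}

lemma pw_pos (k : ℕ) : 0 < pw p k := by
  have : (0:ℝ) < (p:ℝ) := by exact_mod_cast hp.out.pos
  simp [pw]; positivity

omit hp in lemma pw_zero : pw p 0 = 1 := by simp [pw]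

lemma pw_le_one (k : ℕ) : pw p k ≤ 1 := by
  have h1 : (1:ℝ) ≤ (p:ℝ) := by exact_mod_cast hp.out.one_lt.le
  rw [pw, inv_le_one_iff₀]; right; exact one_le_pow₀ h1

lemma pw_add (a b : ℕ) : pw p (a + b) = pw p a * pw p b := by
  simp [pw, pow_add, mul_inv]; ring

lemma pw_mono {a b : ℕ} (h : a ≤ b) : pw p b ≤ pw p a := by
  have h1 : (1:ℝ) ≤ (p:ℝ) := by exact_mod_cast hp.out.one_lt.le
  apply inv_anti₀
  · positivity
  · exact pow_le_pow_right₀ h1 h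

lemma norm_p_pow' (k : ℕ) : ‖((p:ℚ_[p]))^k‖ = pw p k := by
  rw [Padic.norm_p_pow, pw, zpow_neg, zpow_natCast]

lemma norm_p' : ‖((p:ℚ_[p]))‖ = pw p 1 := by
  simpa using norm_p_pow' (p := p) 1

lemma norm_int_le_pw {z : ℤ} {k : ℕ} (h : (p:ℤ)^k ∣ z) : ‖((z:ℚ_[p]))‖ ≤ pw p k := by
  rw [pw, ← zpow_natCast, ← zpow_neg]
  exact (Padic.norm_int_le_pow_iff_dvd z k).2 h

lemma norm_int_le_one' (z : ℤ) : ‖((z:ℚ_[p]))‖ ≤ 1 := Padic.norm_int_le_one z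

lemma norm_nat_le_one (n : ℕ) : ‖((n:ℚ_[p]))‖ ≤ 1 := by
  exact_mod_cast norm_int_le_one' (n : ℤ)

lemma norm_add_le_max (x y : ℚ_[p]) {c : ℝ} (hx : ‖x‖ ≤ c) (hy : ‖y‖ ≤ c) : ‖x + y‖ ≤ c :=
  le_trans (Padic.nonarchimedean x y) (max_le hx hy)

lemma norm_sub_le_max (x y : ℚ_[p]) {c : ℝ} (hx : ‖x‖ ≤ c) (hy : ‖y‖ ≤ c) : ‖x - y‖ ≤ c := by
  rw [sub_eq_add_neg]; exact norm_add_le_max _ _ hx (by simpa)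

lemma norm_sum_le_max {ι : Type*} (s : Finset ι) (f : ι → ℚ_[p]) {c : ℝ} (hc : 0 ≤ c)
    (h : ∀ i ∈ s, ‖f i‖ ≤ c) : ‖∑ i ∈ s, f i‖ ≤ c := by
  classical
  induction s using Finset.induction_on with
  | empty => simpa using hc
  | insert _ _ hns ih =>
      rw [Finset.sum_insert hns]
      exact norm_add_le_max _ _ (h _ (Finset.mem_insert_self _ _))
        (ih fun i hi => h i (Finset.mem_insert_of_mem hi))

lemma norm_two_eq_one (hodd : p ≠ 2) : ‖((2:ℚ_[p]))‖ = 1 := by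
  have h2 : ((2:ℚ_[p])) = ((2:ℤ):ℚ_[p]) := by norm_num
  rcases lt_or_eq_of_le (h2 ▸ norm_int_le_one' (2:ℤ)) with h | h
  · exfalso
    rw [h2, Padic.norm_intCast_lt_one_iff] at h
    have h2' := Int.le_of_dvd (by norm_num) h
    have h2'' : p ≤ 2 := by exact_mod_cast h2'
    have := hp.out.two_le
    omega
  · exact h

lemma norm_pnat_sub_one (hgt : 1 < p) : ‖((p:ℚ_[p]) - 1)‖ = 1 := by
  have hp1 : ‖((p:ℚ_[p]))‖ < 1 := by
    rw [norm_p']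
    calc pw p 1 ≤ ((2:ℝ))⁻¹ := by
          rw [pw, pow_one]
          apply inv_anti₀ (by norm_num)
          exact_mod_cast hgt
      _ < 1 := by norm_num
  have hle : ‖((p:ℚ_[p]) - 1)‖ ≤ 1 :=
    norm_sub_le_max _ _ hp1.le (by simp)
  refine le_antisymm hle ?_
  by_contra hlt
  push_neg at hlt
  have : ‖(1:ℚ_[p])‖ < 1 := by
    have he : (1:ℚ_[p]) = (p:ℚ_[p]) + (-((p:ℚ_[p]) - 1)) := by ring
    calc ‖(1:ℚ_[p])‖ = ‖(p:ℚ_[p]) + (-((p:ℚ_[p]) - 1))‖ := by rw [← he]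
      _ ≤ max ‖(p:ℚ_[p])‖ ‖-((p:ℚ_[p]) - 1)‖ := Padic.nonarchimedean _ _
      _ < 1 := by rw [norm_neg]; exact max_lt hp1 hlt
  simp at this

end tools

section stage2
variable {p : ℕ} [hp : Fact p.Prime]

set_option linter.unusedSectionVars false

/-- Fermat's little theorem: `p ∣ j^(p-1) - 1` for `p ∤ j`. -/
lemma fermat_dvd {j : ℕ} (h1 : 1 ≤ j) (h2 : j < p) :
    ‖((j:ℚ_[p]))^(p-1) - 1‖ ≤ pw p 1 := by
  have hcast : ((j:ℚ_[p]))^(p-1) - 1 = (((j:ℤ)^(p-1) - 1 : ℤ) : ℚ_[p]) := by push_cast; ring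
  rw [hcast]
  apply norm_int_le_pw
  rw [pow_one]
  have hz : ((j:ZMod p)) ≠ 0 := by
    rw [Ne, ZMod.natCast_eq_zero_iff]
    exact fun hd => absurd (Nat.le_of_dvd (by omega) hd) (by omega)
  have := ZMod.pow_card_sub_one_eq_one hz
  have h0 : (((j:ℤ)^(p-1) - 1 : ℤ) : ZMod p) = 0 := by push_cast [this]; ring
  exact_mod_cast (ZMod.intCast_zmod_eq_zero_iff_dvd _ p).1 h0

/-- Wilson's theorem: `p ∣ (p-1)! + 1`. -/
lemma wilson_dvd : ‖((Nat.factorial (p-1) : ℚ_[p])) + 1‖ ≤ pw p 1 := by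
  have hcast : ((Nat.factorial (p-1) : ℚ_[p])) + 1
      = ((((Nat.factorial (p-1) : ℤ)) + 1 : ℤ) : ℚ_[p]) := by push_cast; ring
  rw [hcast]
  apply norm_int_le_pw
  rw [pow_one]
  have := ZMod.wilsons_lemma (p := p)
  have h0 : ((((Nat.factorial (p-1) : ℤ)) + 1 : ℤ) : ZMod p) = 0 := by
    push_cast [this]; ring
  exact_mod_cast (ZMod.intCast_zmod_eq_zero_iff_dvd _ p).1 h0

/-- sum of `x^m` over `ZMod p` vanishes when `0 < m` and `(p-1) ∤ m`. -/
lemma zmod_sum_pow_eq_zero {m : ℕ} (hm : m ≠ 0) (hnd : ¬ (p - 1) ∣ m) :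
    ∑ x : ZMod p, x ^ m = 0 := by
  classical
  have hq : Fintype.card (ZMod p) = p := ZMod.card p
  let φ : (ZMod p)ˣ ↪ ZMod p := ⟨fun x ↦ x, Units.val_injective⟩
  have huniv : Finset.univ.map φ = Finset.univ \ {0} := by
    ext x
    simpa only [Finset.mem_map, Finset.mem_univ, Function.Embedding.coeFn_mk, true_and,
      Finset.mem_sdiff, Finset.mem_singleton, φ, IsUnit] using isUnit_iff_ne_zero
  calc
    ∑ x : ZMod p, x ^ m = ∑ x ∈ Finset.univ \ {(0 : ZMod p)}, x ^ m := by
      rw [← Finset.sum_sdiff (({0} : Finset (ZMod p)).subset_univ), Finset.sum_singleton,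
        zero_pow hm, add_zero]
    _ = ∑ x : (ZMod p)ˣ, ((x:ZMod p)) ^ m := by
      rw [← huniv, Finset.sum_map]; rfl
    _ = 0 := by
      rw [FiniteField.sum_pow_units (ZMod p) m, if_neg]
      rwa [hq]

/-- `p ∣ ∑_{j<p} j^m` when `0 < m`, `(p-1) ∤ m`. -/
lemma sum_pow_dvd {m : ℕ} (hm : m ≠ 0) (hnd : ¬ (p - 1) ∣ m) :
    ‖((∑ j ∈ Finset.range p, (j:ℚ_[p]) ^ m))‖ ≤ pw p 1 := by
  have hcast : (∑ j ∈ Finset.range p, (j:ℚ_[p]) ^ m)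
      = (((∑ j ∈ Finset.range p, (j:ℤ) ^ m : ℤ)) : ℚ_[p]) := by push_cast; ring
  rw [hcast]
  apply norm_int_le_pw
  rw [pow_one]
  have h0 : (((∑ j ∈ Finset.range p, (j:ℤ) ^ m : ℤ)) : ZMod p) = 0 := by
    push_cast
    rw [show (∑ j ∈ Finset.range p, (j:ZMod p) ^ m) = ∑ x : ZMod p, x ^ m from ?_,
      zmod_sum_pow_eq_zero hm hnd]
    · exact Finset.sum_nbij' (fun j => (j : ZMod p)) (fun x => x.val)
        (by intros; simp) (by intro a ha; exact Finset.mem_range.2 (ZMod.val_lt a))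
        (by intro a ha; exact ZMod.val_cast_of_lt (Finset.mem_range.1 ha))
        (by intro a ha; exact ZMod.natCast_zmod_val a)
        (by intros; rfl)
  exact_mod_cast (ZMod.intCast_zmod_eq_zero_iff_dvd _ p).1 h0

/-- Key product expansion: `∏ (1 + p aᵢ) = 1 + p Σa + p² ((Σa)²-Σa²)/2 + p³ z`. -/
lemma prod_expand (hodd : p ≠ 2) {ι : Type*} (s : Finset ι) (a : ι → ℚ_[p])
    (ha : ∀ i ∈ s, ‖a i‖ ≤ 1) :
    ∃ z : ℚ_[p], ‖z‖ ≤ 1 ∧ ∏ i ∈ s, (1 + (p:ℚ_[p]) * a i)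
      = 1 + (p:ℚ_[p]) * (∑ i ∈ s, a i)
        + (p:ℚ_[p])^2 * (((∑ i ∈ s, a i)^2 - ∑ i ∈ s, (a i)^2) / 2)
        + (p:ℚ_[p])^3 * z := by
  classical
  have h2 : ‖((2:ℚ_[p]))‖ = 1 := norm_two_eq_one hodd
  induction s using Finset.cons_induction with
  | empty => exact ⟨0, by norm_num⟩
  | cons i s his ih =>
      obtain ⟨z, hz, hm⟩ := ih (fun j hj => ha j (Finset.mem_cons_of_mem hj))
      have hai : ‖a i‖ ≤ 1 := ha i (Finset.mem_cons_self i s)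
      set S := ∑ j ∈ s, a j with hS
      set S2 := ∑ j ∈ s, (a j)^2 with hS2
      have hSn : ‖S‖ ≤ 1 := norm_sum_le_max _ _ zero_le_one
        (fun j hj => ha j (Finset.mem_cons_of_mem hj))
      have hS2n : ‖S2‖ ≤ 1 := norm_sum_le_max _ _ zero_le_one
        (fun j hj => by
          have := ha j (Finset.mem_cons_of_mem hj)
          calc ‖(a j)^2‖ = ‖a j‖^2 := by rw [norm_pow]
            _ ≤ 1 := by nlinarith [norm_nonneg (a j)])
      refine ⟨z + a i * ((S^2 - S2)/2) + (p:ℚ_[p]) * (a i * z), ?_, ?_⟩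
      · apply norm_add_le_max
        · apply norm_add_le_max _ _ hz
          rw [norm_mul, norm_div, h2, div_one]
          calc ‖a i‖ * ‖S^2 - S2‖ ≤ 1 * 1 := by
                apply mul_le_mul hai ?_ (norm_nonneg _) zero_le_one
                apply norm_sub_le_max
                · rw [norm_pow]; nlinarith [norm_nonneg S]
                · exact hS2n
            _ = 1 := by norm_num
        · rw [norm_mul, norm_mul]
          calc ‖(p:ℚ_[p])‖ * (‖a i‖ * ‖z‖) ≤ 1 * (1*1) := by
                apply mul_le_mul _ _ (by positivity) zero_le_one
                · rw [norm_p']; exact pw_le_one 1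
                · exact mul_le_mul hai hz (norm_nonneg _) zero_le_one
            _ = 1 := by norm_num
      · rw [Finset.prod_cons, hm, Finset.sum_cons, Finset.sum_cons, ← hS, ← hS2]
        field_simp
        ring

section stage3a
variable {p : ℕ} [hp : Fact p.Prime]
set_option linter.unusedSectionVars false

end stage3a

/-- Power sums in `ℚ_p`. -/
noncomputable def Spow (p : ℕ) [Fact p.Prime] (m : ℕ) : ℚ_[p] :=
  ∑ j ∈ Finset.range p, (j:ℚ_[p])^m

/-- Bernoulli numbers in `ℚ_p`. -/
noncomputable def bb (p : ℕ) [Fact p.Prime] (k : ℕ) : ℚ_[p] := ((bernoulli k : ℚ) : ℚ_[p])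

section stage3b
variable {p : ℕ} [hp : Fact p.Prime]
set_option linter.unusedSectionVars false

lemma norm_Spow_le_one (m : ℕ) : ‖(Spow p m)‖ ≤ 1 := by
  apply norm_sum_le_max _ _ zero_le_one
  intro j _
  rw [norm_pow]
  exact pow_le_one₀ (norm_nonneg _) (norm_nat_le_one j)

lemma norm_nat_eq_one {n : ℕ} (h : ¬ p ∣ n) : ‖((n:ℚ_[p]))‖ = 1 := by
  rcases lt_or_eq_of_le (norm_nat_le_one (p := p) n) with hlt | he
  · exfalso
    have : ‖(((n:ℤ)):ℚ_[p])‖ < 1 := by exact_mod_cast hlt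
    rw [Padic.norm_intCast_lt_one_iff] at this
    exact h (by exact_mod_cast this)
  · exact he

/-- Faulhaber's identity in `ℚ_p`, top term split off. -/
lemma faulhaber_split (m : ℕ) :
    (((m+1 : ℕ)):ℚ_[p]) * Spow p m
      = (((m+1:ℕ)):ℚ_[p]) * ((p:ℚ_[p]) * bb p m)
        + ∑ k ∈ Finset.range m,
            bb p k * (((m+1).choose k : ℕ) : ℚ_[p]) * (p:ℚ_[p])^(m+1-k) := by
  have hQ : ((m+1 : ℕ):ℚ) * (∑ j ∈ Finset.range p, (j:ℚ)^m)
      = ∑ k ∈ Finset.range (m+1), bernoulli k * ((m+1).choose k : ℕ) * (p:ℚ)^(m+1-k) := by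
    rw [sum_range_pow, Finset.mul_sum]
    apply Finset.sum_congr rfl
    intro k hk
    have hne : ((m+1:ℕ):ℚ) ≠ 0 := by positivity
    push_cast
    push_cast at hne
    field_simp
  have hlast : (bernoulli m * ((m+1).choose m : ℕ) * (p:ℚ)^(m+1-m) : ℚ)
      = ((m+1:ℕ):ℚ) * ((p:ℚ) * bernoulli m) := by
    rw [Nat.choose_succ_self_right, Nat.add_sub_cancel_left, pow_one]
    push_cast; ring
  rw [Finset.sum_range_succ, hlast] at hQ
  have hQ' : ((m+1 : ℕ):ℚ) * (∑ j ∈ Finset.range p, (j:ℚ)^m)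
      = ((m+1:ℕ):ℚ) * ((p:ℚ) * bernoulli m)
        + ∑ k ∈ Finset.range m, bernoulli k * ((m+1).choose k : ℕ) * (p:ℚ)^(m+1-k) := by
    rw [hQ]; ring
  simp only [Spow, bb]
  exact_mod_cast congrArg (fun q : ℚ => ((q : ℚ_[p]))) hQ'

/-- `p·Bₘ` is a `p`-adic integer for `m+1 < p²`. -/
lemma norm_p_mul_bernoulli_le_one : ∀ m : ℕ, m + 1 < p^2 → ‖(p:ℚ_[p]) * bb p m‖ ≤ 1 := by
  intro m
  induction m using Nat.strong_induction_on with
  | _ m ih =>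
  intro hm2
  set c : ℝ := ‖(((m+1:ℕ)):ℚ_[p])‖ with hc
  have hcge : pw p 1 ≤ c := by
    by_cases hdvd : p ∣ (m+1)
    · obtain ⟨u, hu⟩ := hdvd
      have hu0 : ¬ p ∣ u := by
        rintro ⟨v, rfl⟩
        have : p^2 ∣ (m+1) := ⟨v, by rw [hu]; ring⟩
        exact absurd (Nat.le_of_dvd (by omega) this) (by omega)
      rw [hc, hu]
      push_cast
      rw [norm_mul, norm_p', norm_nat_eq_one hu0, mul_one]
    · rw [hc, norm_nat_eq_one hdvd]
      exact pw_le_one 1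
  have hcpos : 0 < c := lt_of_lt_of_le (pw_pos 1) hcge
  have key : ‖(((m+1:ℕ)):ℚ_[p]) * ((p:ℚ_[p]) * bb p m)‖ ≤ c := by
    have hid := faulhaber_split (p := p) m
    have : (((m+1:ℕ)):ℚ_[p]) * ((p:ℚ_[p]) * bb p m)
        = (((m+1:ℕ)):ℚ_[p]) * Spow p m
          - ∑ k ∈ Finset.range m,
              bb p k * (((m+1).choose k : ℕ) : ℚ_[p]) * (p:ℚ_[p])^(m+1-k) := by
      rw [hid]; ring
    rw [this]
    apply norm_sub_le_max
    · rw [norm_mul, ← hc]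
      calc c * ‖Spow p m‖ ≤ c * 1 := by
            exact mul_le_mul_of_nonneg_left (norm_Spow_le_one m) hcpos.le
        _ = c := mul_one c
    · apply norm_sum_le_max _ _ hcpos.le
      intro k hk
      have hkm : k < m := Finset.mem_range.1 hk
      have hterm : bb p k * (((m+1).choose k : ℕ) : ℚ_[p]) * (p:ℚ_[p])^(m+1-k)
          = ((p:ℚ_[p]) * bb p k) * ((((m+1).choose k : ℕ)) : ℚ_[p]) * (p:ℚ_[p])^(m-k) := by
        have : m + 1 - k = (m - k) + 1 := by omega
        rw [this, pow_succ]
        ring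
      rw [hterm, norm_mul, norm_mul, norm_p_pow']
      calc ‖(p:ℚ_[p]) * bb p k‖ * ‖(((m+1).choose k : ℕ) : ℚ_[p])‖ * pw p (m-k)
          ≤ 1 * 1 * pw p 1 := by
            apply mul_le_mul _ (pw_mono (by omega)) (pw_pos _).le (by norm_num)
            apply mul_le_mul (ih k hkm (by omega)) (norm_nat_le_one _) (norm_nonneg _) zero_le_one
        _ = pw p 1 := by norm_num
        _ ≤ c := hcge
  rw [norm_mul, ← hc] at key
  have h1 : c * ‖(p:ℚ_[p]) * bb p m‖ ≤ c * 1 := by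
    rw [mul_one]; rw [norm_mul] at key ⊢; exact key
  exact le_of_mul_le_mul_left h1 hcpos

end stage3b

section stage4
variable {p : ℕ} [hp : Fact p.Prime]
set_option linter.unusedSectionVars false

lemma pbern_sub_Spow {m : ℕ} (hm1 : ¬ p ∣ (m+1)) (hm2 : m + 1 < p^2) :
    ‖(p:ℚ_[p]) * bb p m - Spow p m‖ ≤ pw p 1 := by
  have hid := faulhaber_split (p := p) m
  have hdiff : (((m+1:ℕ)):ℚ_[p]) * ((p:ℚ_[p]) * bb p m - Spow p m)
      = -∑ k ∈ Finset.range m,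
          bb p k * (((m+1).choose k : ℕ) : ℚ_[p]) * (p:ℚ_[p])^(m+1-k) := by
    rw [mul_sub, hid]; ring
  have hn1 : ‖(((m+1:ℕ)):ℚ_[p])‖ = 1 := norm_nat_eq_one hm1
  have key : ‖(((m+1:ℕ)):ℚ_[p]) * ((p:ℚ_[p]) * bb p m - Spow p m)‖ ≤ pw p 1 := by
    rw [hdiff, norm_neg]
    apply norm_sum_le_max _ _ (pw_pos 1).le
    intro k hk
    have hkm : k < m := Finset.mem_range.1 hk
    have hterm : bb p k * (((m+1).choose k : ℕ) : ℚ_[p]) * (p:ℚ_[p])^(m+1-k)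
        = ((p:ℚ_[p]) * bb p k) * ((((m+1).choose k : ℕ)) : ℚ_[p]) * (p:ℚ_[p])^(m-k) := by
      have : m + 1 - k = (m - k) + 1 := by omega
      rw [this, pow_succ]; ring
    rw [hterm, norm_mul, norm_mul, norm_p_pow']
    calc ‖(p:ℚ_[p]) * bb p k‖ * ‖(((m+1).choose k : ℕ) : ℚ_[p])‖ * pw p (m-k)
        ≤ 1 * 1 * pw p 1 := by
          apply mul_le_mul _ (pw_mono (by omega)) (pw_pos _).le (by norm_num)
          exact mul_le_mul (norm_p_mul_bernoulli_le_one k (by omega)) (norm_nat_le_one _)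
            (norm_nonneg _) zero_le_one
      _ = pw p 1 := by norm_num
  rwa [norm_mul, hn1, one_mul] at key

lemma bern_int {k : ℕ} (hk0 : k ≠ 0) (hknd : ¬ (p-1) ∣ k) (hk1 : ¬ p ∣ (k+1))
    (hk2 : k+1 < p^2) : ‖bb p k‖ ≤ 1 := by
  have h1 : ‖(p:ℚ_[p]) * bb p k‖ ≤ pw p 1 := by
    have : (p:ℚ_[p]) * bb p k = ((p:ℚ_[p]) * bb p k - Spow p k) + Spow p k := by ring
    rw [this]
    exact norm_add_le_max _ _ (pbern_sub_Spow hk1 hk2) (sum_pow_dvd hk0 hknd)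
  rw [norm_mul, norm_p'] at h1
  have hpos : (0:ℝ) < pw p 1 := pw_pos 1
  have : pw p 1 * ‖bb p k‖ ≤ pw p 1 * 1 := by rwa [mul_one]
  exact le_of_mul_le_mul_left this hpos

lemma bern_odd_zero {k : ℕ} (hodd : Odd k) (hk : 1 < k) : bb p k = 0 := by
  rw [bb, bernoulli_eq_bernoulli'_of_ne_one (by omega), bernoulli'_eq_zero_of_odd hodd hk]
  norm_num

lemma bern_norm_le_one (hp5 : 5 ≤ p) {k : ℕ} (hk : k < 2*p - 2) (hke : k ≠ p - 1) :
    ‖bb p k‖ ≤ 1 := by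
  rcases Nat.eq_zero_or_pos k with rfl | hk0
  · simp [bb]
  rcases eq_or_ne k 1 with rfl | hk1
  · rw [bb, bernoulli_one]
    have : ((((-1)/2 : ℚ)) : ℚ_[p]) = -(((2:ℚ_[p]))⁻¹) := by
      push_cast; ring
    rw [this, norm_neg, norm_inv, norm_two_eq_one (by omega)]
    norm_num
  rcases Nat.even_or_odd k with hev | hod
  · apply bern_int (by omega) ?_ ?_ ?_
    · rintro ⟨t, rfl⟩
      rcases Nat.lt_or_ge t 2 with h' | h'
      · interval_cases t <;> omega
      · have h2 : (p-1)*2 ≤ (p-1)*t := Nat.mul_le_mul_left _ h'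
        omega
    · rintro ⟨t, ht⟩
      rcases Nat.lt_or_ge t 2 with h' | h'
      · interval_cases t <;> omega
      · have h2 : p*2 ≤ p*t := Nat.mul_le_mul_left _ h'
        omega
    · have h2 : 2*p ≤ p*p := Nat.mul_le_mul_right p (by omega)
      have h3 : p^2 = p*p := sq p
      omega
  · rw [bern_odd_zero hod (by omega)]
    simp

end stage4

section stage5
variable {p : ℕ} [hp : Fact p.Prime]
set_option linter.unusedSectionVars false

lemma p_odd (hp5 : 5 ≤ p) : ¬ (2 ∣ p) := by
  intro h
  rcases (Nat.Prime.eq_one_or_self_of_dvd hp.out 2 h) with h' | h' <;> omega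

/-- `A ≡ p B_{p-1} (mod p³)`. -/
lemma A_cong (hp5 : 5 ≤ p) :
    ‖Spow p (p-1) - (p:ℚ_[p]) * bb p (p-1)‖ ≤ pw p 3 := by
  have hm : p - 1 + 1 = p := by omega
  have hid := faulhaber_split (p := p) (p-1)
  rw [hm] at hid
  have hdiff : (p:ℚ_[p]) * (Spow p (p-1) - (p:ℚ_[p]) * bb p (p-1))
      = ∑ k ∈ Finset.range (p-1),
          bb p k * ((p.choose k : ℕ) : ℚ_[p]) * (p:ℚ_[p])^(p-k) := by
    rw [mul_sub, hid]
    ring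
  have hodd : ¬ (2 ∣ p) := p_odd hp5
  have key : ∀ k ∈ Finset.range (p-1),
      ‖bb p k * ((p.choose k : ℕ) : ℚ_[p]) * (p:ℚ_[p])^(p-k)‖ ≤ pw p 4 := by
    intro k hk
    have hkm : k < p - 1 := Finset.mem_range.1 hk
    rcases Nat.eq_zero_or_pos k with rfl | hk0
    · have he : bb p 0 * ((p.choose 0 : ℕ) : ℚ_[p]) * (p:ℚ_[p])^(p-0) = (p:ℚ_[p])^p := by
        simp [bb]
      rw [he, norm_p_pow']
      exact pw_mono (by omega)
    rcases Nat.even_or_odd k with hev | hod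
    case inr =>
      rcases eq_or_ne k 1 with rfl | hk1
      · rw [norm_mul, norm_mul, norm_p_pow']
        have h1 : ‖bb p 1‖ ≤ 1 := bern_norm_le_one hp5 (by omega) (by omega)
        have h2 : ‖((p.choose 1 : ℕ) : ℚ_[p])‖ ≤ pw p 1 := by
          rw [Nat.choose_one_right]
          apply norm_int_le_pw (k := 1)
          simpa using dvd_refl (p:ℤ)
        calc ‖bb p 1‖ * ‖((p.choose 1 : ℕ) : ℚ_[p])‖ * pw p (p-1)
            ≤ 1 * pw p 1 * pw p 3 := by
              apply mul_le_mul (mul_le_mul h1 h2 (norm_nonneg _) zero_le_one)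
                (pw_mono (by omega)) (pw_pos _).le (by have := pw_pos (p := p) 1; nlinarith)
          _ = pw p 4 := by rw [one_mul, ← pw_add]
      · rw [bern_odd_zero hod (by omega)]
        simpa using (pw_pos (p := p) 4).le
    case inl =>
      -- k even, 2 ≤ k ≤ p - 3
      have hk3 : k ≤ p - 3 := by
        rcases eq_or_ne k (p-2) with rfl | hne
        · exfalso
          rcases hev with ⟨t, ht⟩
          have : ¬ 2 ∣ p - 2 := by
            intro ⟨u, hu⟩
            exact hodd ⟨u+1, by omega⟩
          exact this ⟨t, by omega⟩
        · omega
      rw [norm_mul, norm_mul, norm_p_pow']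
      have h1 : ‖bb p k‖ ≤ 1 := bern_norm_le_one hp5 (by omega) (by omega)
      have h2 : ‖((p.choose k : ℕ) : ℚ_[p])‖ ≤ pw p 1 := by
        apply norm_int_le_pw (k := 1)
        have hne0 : k ≠ 0 := by omega
        have hltp : k < p := by omega
        have hch := hp.out.dvd_choose_self hne0 hltp
        simpa using Int.natCast_dvd_natCast.2 hch
      calc ‖bb p k‖ * ‖((p.choose k : ℕ) : ℚ_[p])‖ * pw p (p-k)
          ≤ 1 * pw p 1 * pw p 3 := by
            apply mul_le_mul (mul_le_mul h1 h2 (norm_nonneg _) zero_le_one)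
              (pw_mono (by omega)) (pw_pos _).le (by have := pw_pos (p := p) 1; nlinarith)
        _ = pw p 4 := by rw [one_mul, ← pw_add]
  have hfinal : ‖(p:ℚ_[p]) * (Spow p (p-1) - (p:ℚ_[p]) * bb p (p-1))‖ ≤ pw p 4 := by
    rw [hdiff]
    exact norm_sum_le_max _ _ (pw_pos 4).le key
  rw [norm_mul, norm_p'] at hfinal
  have h4 : pw p 4 = pw p 1 * pw p 3 := by rw [← pw_add]
  rw [h4] at hfinal
  exact le_of_mul_le_mul_left hfinal (pw_pos 1)

/-- `C ≡ p B_{2p-2} (mod p³)`. -/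
lemma C_cong (hp5 : 5 ≤ p) :
    ‖Spow p (2*p-2) - (p:ℚ_[p]) * bb p (2*p-2)‖ ≤ pw p 3 := by
  have hm : 2*p - 2 + 1 = 2*p - 1 := by omega
  have hid := faulhaber_split (p := p) (2*p-2)
  rw [hm] at hid
  have hdvd : ¬ p ∣ (2*p - 1) := by
    intro ⟨t, ht⟩
    rcases Nat.lt_or_ge t 2 with h' | h'
    · interval_cases t <;> omega
    · have h2 : p*2 ≤ p*t := Nat.mul_le_mul_left _ h'
      omega
  have hn1 : ‖(((2*p-1:ℕ)):ℚ_[p])‖ = 1 := norm_nat_eq_one hdvd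
  have hdiff : (((2*p-1:ℕ)):ℚ_[p]) * (Spow p (2*p-2) - (p:ℚ_[p]) * bb p (2*p-2))
      = ∑ k ∈ Finset.range (2*p-2),
          bb p k * (((2*p-1).choose k : ℕ) : ℚ_[p]) * (p:ℚ_[p])^(2*p-1-k) := by
    rw [mul_sub, hid]
    ring
  have key : ∀ k ∈ Finset.range (2*p-2),
      ‖bb p k * (((2*p-1).choose k : ℕ) : ℚ_[p]) * (p:ℚ_[p])^(2*p-1-k)‖ ≤ pw p 3 := by
    intro k hk
    have hkm : k < 2*p-2 := Finset.mem_range.1 hk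
    rcases eq_or_ne k (p-1) with rfl | hke
    · have he : (2*p-1-(p-1)) = (p-1)+1 := by omega
      have ht : bb p (p-1) * (((2*p-1).choose (p-1) : ℕ) : ℚ_[p]) * (p:ℚ_[p])^(2*p-1-(p-1))
          = ((p:ℚ_[p]) * bb p (p-1)) * (((2*p-1).choose (p-1) : ℕ) : ℚ_[p])
            * (p:ℚ_[p])^(p-1) := by
        rw [he, pow_succ]; ring
      rw [ht, norm_mul, norm_mul, norm_p_pow']
      have hlt : (p-1) + 1 < p^2 := by
        have h2 : 2*p ≤ p*p := Nat.mul_le_mul_right p (by omega)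
        have h3 : p^2 = p*p := sq p
        omega
      calc ‖(p:ℚ_[p]) * bb p (p-1)‖ * ‖(((2*p-1).choose (p-1) : ℕ) : ℚ_[p])‖ * pw p (p-1)
          ≤ 1 * 1 * pw p 3 := by
            apply mul_le_mul (mul_le_mul (norm_p_mul_bernoulli_le_one (p-1) hlt)
              (norm_nat_le_one _) (norm_nonneg _) zero_le_one)
              (pw_mono (by omega)) (pw_pos _).le (by norm_num)
        _ = pw p 3 := by norm_num
    · by_cases hod : Odd k ∧ 1 < k
      · rw [bern_odd_zero hod.1 hod.2]
        simpa using (pw_pos (p := p) 3).le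
      · have hk4 : k ≤ 2*p-4 := by
          rcases eq_or_ne k (2*p-3) with rfl | hne
          · exfalso
            exact hod ⟨⟨p-2, by omega⟩, by omega⟩
          · omega
        have h1 : ‖bb p k‖ ≤ 1 := bern_norm_le_one hp5 (by omega) hke
        rw [norm_mul, norm_mul, norm_p_pow']
        calc ‖bb p k‖ * ‖(((2*p-1).choose k : ℕ) : ℚ_[p])‖ * pw p (2*p-1-k)
            ≤ 1 * 1 * pw p 3 := by
              apply mul_le_mul (mul_le_mul h1 (norm_nat_le_one _) (norm_nonneg _) zero_le_one)
                (pw_mono (by omega)) (pw_pos _).le (by norm_num)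
          _ = pw p 3 := by norm_num
  have hfinal : ‖(((2*p-1:ℕ)):ℚ_[p]) * (Spow p (2*p-2) - (p:ℚ_[p]) * bb p (2*p-2))‖ ≤ pw p 3 := by
    rw [hdiff]
    exact norm_sum_le_max _ _ (pw_pos 3).le key
  rwa [norm_mul, hn1, one_mul] at hfinal

end stage5

/-- Sun (2000): for a prime `p > 3`,
`(p-1)! ≡ p·B_{2p-2}/(2p-2) - p·B_{p-1}/(p-1) - (1/2)(p·B_{p-1}/(p-1))² (mod p³)` in `ℤ_p`. -/
theorem sun_wilson (p : ℕ) [hp : Fact p.Prime] (h3 : 3 < p) :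
    ∃ z : ℤ_[p],
      (Nat.factorial (p - 1) : ℚ_[p]) -
        ((p : ℚ_[p]) * ((bernoulli (2 * p - 2) : ℚ) : ℚ_[p]) / (2 * (p : ℚ_[p]) - 2)
          - (p : ℚ_[p]) * ((bernoulli (p - 1) : ℚ) : ℚ_[p]) / ((p : ℚ_[p]) - 1)
          - (1 / 2) * ((p : ℚ_[p]) * ((bernoulli (p - 1) : ℚ) : ℚ_[p]) / ((p : ℚ_[p]) - 1)) ^ 2)
      = (p : ℚ_[p]) ^ 3 * (z : ℚ_[p]) := by
  classical
  have hp5 : 5 ≤ p := by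
    have h4 : ¬ Nat.Prime 4 := by norm_num
    have := hp.out
    rcases Nat.lt_or_ge p 5 with h | h
    · interval_cases p <;> simp_all
    · exact h
  have hne2 : p ≠ 2 := by omega
  set π : ℚ_[p] := (p : ℚ_[p]) with hπ
  have hπne : π ≠ 0 := by
    rw [hπ]
    exact_mod_cast Nat.cast_ne_zero.2 (by omega)
  have hπn : ‖π‖ = pw p 1 := norm_p'
  have hπle : ‖π‖ ≤ 1 := by rw [hπn]; exact pw_le_one 1
  have h2norm : ‖(2:ℚ_[p])‖ = 1 := norm_two_eq_one hne2
  have hn1norm : ‖π - 1‖ = 1 := norm_pnat_sub_one (by omega)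
  have hn1ne : (π - 1) ≠ 0 := by
    intro h; rw [h] at hn1norm; simp at hn1norm
  have h2ne : (2:ℚ_[p]) ≠ 0 := two_ne_zero
  -- Fermat quotients
  set q : ℕ → ℚ_[p] := fun j => ((j:ℚ_[p])^(p-1) - 1) / π with hqdef
  have hq : ∀ j ∈ Finset.Ico 1 p, (j:ℚ_[p])^(p-1) = 1 + π * q j := by
    intro j hj
    rw [hqdef]
    field_simp
    ring
  have hqn : ∀ j ∈ Finset.Ico 1 p, ‖q j‖ ≤ 1 := by
    intro j hj
    obtain ⟨h1, h2⟩ := Finset.mem_Ico.1 hj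
    rw [hqdef]
    simp only
    rw [norm_div, hπn, div_le_one (pw_pos 1)]
    exact fermat_dvd h1 h2
  set Q1 : ℚ_[p] := ∑ j ∈ Finset.Ico 1 p, q j with hQ1def
  set Q2 : ℚ_[p] := ∑ j ∈ Finset.Ico 1 p, (q j)^2 with hQ2def
  have hQ1n : ‖Q1‖ ≤ 1 := norm_sum_le_max _ _ zero_le_one hqn
  have hQ2n : ‖Q2‖ ≤ 1 := by
    apply norm_sum_le_max _ _ zero_le_one
    intro j hj
    rw [norm_pow]
    exact pow_le_one₀ (norm_nonneg _) (hqn j hj)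
  -- Wilson quotient
  set W : ℚ_[p] := ((Nat.factorial (p-1) : ℚ_[p]) + 1) / π with hWdef
  have hW : (Nat.factorial (p-1) : ℚ_[p]) = π * W - 1 := by
    rw [hWdef]; field_simp; ring
  have hWn : ‖W‖ ≤ 1 := by
    rw [hWdef, norm_div, hπn, div_le_one (pw_pos 1)]
    exact wilson_dvd
  -- A and C as sums over Ico 1 p
  have hbot : ∀ m : ℕ, m ≠ 0 → Spow p m = ∑ j ∈ Finset.Ico 1 p, (j:ℚ_[p])^m := by
    intro m hm
    rw [Spow, Finset.range_eq_Ico, Finset.sum_eq_sum_Ico_succ_bot (by omega : 0 < p)]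
    norm_num [zero_pow hm]
  have hA1 : Spow p (p-1) = ((p-1:ℕ) : ℚ_[p]) + π * Q1 := by
    rw [hbot (p-1) (by omega), Finset.sum_congr rfl hq, Finset.sum_add_distrib,
      Finset.sum_const, Nat.card_Ico, ← Finset.mul_sum, nsmul_eq_mul, mul_one, hQ1def]
  have hC1 : Spow p (2*p-2) = ((p-1:ℕ) : ℚ_[p]) + 2*π*Q1 + π^2*Q2 := by
    have hss : ∀ j ∈ Finset.Ico 1 p, (j:ℚ_[p])^(2*p-2) = 1 + 2*π*(q j) + π^2*(q j)^2 := by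
      intro j hj
      have h1 : (j:ℚ_[p])^(2*p-2) = ((j:ℚ_[p])^(p-1))^2 := by
        rw [← pow_mul]
        congr 1
        omega
      rw [h1, hq j hj]
      ring
    rw [hbot (2*p-2) (by omega), Finset.sum_congr rfl hss]
    rw [Finset.sum_add_distrib, Finset.sum_add_distrib, Finset.sum_const, Nat.card_Ico,
      ← Finset.mul_sum, ← Finset.mul_sum, nsmul_eq_mul, mul_one, hQ1def, hQ2def]
  -- the product identity
  have hF1 : ∏ j ∈ Finset.Ico 1 p, (1 + π * q j) = ((Nat.factorial (p-1) : ℚ_[p]))^(p-1) := by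
    rw [← Finset.prod_congr rfl hq, Finset.prod_pow]
    congr 1
    have hfac := Finset.prod_Ico_id_eq_factorial (p-1)
    rw [show p - 1 + 1 = p from by omega] at hfac
    rw [← Nat.cast_prod, hfac]
  -- expansions
  obtain ⟨z₁, hz₁, hE5⟩ := prod_expand hne2 (Finset.Ico 1 p) q hqn
  rw [← hQ1def, ← hQ2def] at hE5
  obtain ⟨z₂, hz₂, hE6⟩ := prod_expand hne2 (Finset.range (p-1)) (fun _ => -W)
    (fun _ _ => by rw [norm_neg]; exact hWn)
  have hcard : ∑ _j ∈ Finset.range (p-1), (-W) = ((p-1:ℕ):ℚ_[p]) * (-W) := by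
    rw [Finset.sum_const, Finset.card_range, nsmul_eq_mul]
  have hcard2 : ∑ _j ∈ Finset.range (p-1), (-W)^2 = ((p-1:ℕ):ℚ_[p]) * W^2 := by
    rw [Finset.sum_const, Finset.card_range, nsmul_eq_mul]
    ring
  rw [hcard, hcard2] at hE6
  have hn1cast : ((p-1:ℕ):ℚ_[p]) = π - 1 := by
    rw [Nat.cast_sub (by omega : 1 ≤ p), Nat.cast_one, hπ]
  rw [hn1cast] at hE6 hA1 hC1
  have hEvenp : Even (p-1) := by
    have hoddp : Odd p := hp.out.odd_of_ne_two hne2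
    exact Nat.Odd.sub_odd hoddp odd_one
  have hprodconst : ∏ _j ∈ Finset.range (p-1), (1 + π * (-W))
      = ((Nat.factorial (p-1) : ℚ_[p]))^(p-1) := by
    rw [Finset.prod_const, Finset.card_range, hW]
    rw [show π * W - 1 = -(1 - π * W) from by ring, Even.neg_pow hEvenp]
    congr 1
    ring
  rw [hprodconst] at hE6
  -- the master relation
  have hstar : 1 + π * Q1 + π^2*((Q1^2 - Q2)/2) + π^3*z₁
      = 1 + π * ((π-1) * (-W)) + π^2*((((π-1)*(-W))^2 - (π-1)*W^2)/2) + π^3*z₂ := by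
    rw [← hE5, ← hE6, hF1]
  -- Q1 + (π-1) W is divisible by p
  have hQ1W : Q1 + (π-1) * W
      = π * (-((Q1^2 - Q2)/2) + (((π-1)*W)^2 - (π-1)*W^2)/2 + π*(z₂ - z₁)) := by
    apply mul_left_cancel₀ hπne
    linear_combination hstar
  -- norm facts
  have norm_mul_le_le : ∀ {x y : ℚ_[p]} {a b : ℝ}, ‖x‖ ≤ a → ‖y‖ ≤ b → ‖x*y‖ ≤ a*b := by
    intro x y a b hx hy
    rw [norm_mul]
    exact mul_le_mul hx hy (norm_nonneg _) (le_trans (norm_nonneg _) hx)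
  have pw_one_pow : ∀ k : ℕ, pw p 1 ^ k = pw p k := by
    intro k
    rw [pw, pw, pow_one, inv_pow]
  have hR : ‖-((Q1^2 - Q2)/2) + ((((π-1))*W)^2 - (π-1)*W^2)/2 + π*(z₂ - z₁)‖ ≤ 1 := by
    apply norm_add_le_max
    · apply norm_add_le_max
      · rw [norm_neg, norm_div, h2norm, div_one]
        apply norm_sub_le_max
        · rw [norm_pow]
          exact pow_le_one₀ (norm_nonneg _) hQ1n
        · exact hQ2n
      · rw [norm_div, h2norm, div_one]
        apply norm_sub_le_max
        · rw [norm_pow]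
          apply pow_le_one₀ (norm_nonneg _)
          rw [norm_mul, hn1norm, one_mul]
          exact hWn
        · rw [norm_mul, hn1norm, one_mul, norm_pow]
          exact pow_le_one₀ (norm_nonneg _) hWn
    · calc ‖π * (z₂ - z₁)‖ ≤ 1 * 1 := norm_mul_le_le hπle (norm_sub_le_max _ _ hz₂ hz₁)
        _ = 1 := by norm_num
  have hQ1Wn : ‖Q1 + (π-1)*W‖ ≤ pw p 1 := by
    rw [hQ1W]
    calc ‖π * (-((Q1^2 - Q2)/2) + ((((π-1))*W)^2 - (π-1)*W^2)/2 + π*(z₂ - z₁))‖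
        ≤ pw p 1 * 1 := norm_mul_le_le (le_of_eq hπn) hR
      _ = pw p 1 := mul_one _
  -- the two Bernoulli congruences
  set XA : ℚ_[p] := Spow p (p-1) - π * bb p (p-1) with hXAdef
  set XC : ℚ_[p] := Spow p (2*p-2) - π * bb p (2*p-2) with hXCdef
  have hXA : ‖XA‖ ≤ pw p 3 := A_cong hp5
  have hXC : ‖XC‖ ≤ pw p 3 := C_cong hp5
  have hβ : π * bb p (p-1) = (π - 1) + π*Q1 - XA := by
    rw [hXAdef, hA1]; ring
  have hδ : π * bb p (2*p-2) = (π - 1) + 2*π*Q1 + π^2*Q2 - XC := by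
    rw [hXCdef, hC1]; ring
  -- rewrite the goal in terms of bb
  have hbb2 : ((bernoulli (2 * p - 2) : ℚ) : ℚ_[p]) = bb p (2*p-2) := rfl
  have hbb1 : ((bernoulli (p - 1) : ℚ) : ℚ_[p]) = bb p (p-1) := rfl
  rw [hbb1, hbb2]
  set E : ℚ_[p] := (Nat.factorial (p - 1) : ℚ_[p]) -
      (π * bb p (2*p-2) / (2 * π - 2) - π * bb p (p-1) / (π - 1)
        - (1/2) * (π * bb p (p-1) / (π - 1))^2) with hEdef
  -- main algebraic identity
  have hT2 : 2*(π-1)^2 * (π * bb p (2*p-2) / (2 * π - 2) - π * bb p (p-1) / (π - 1)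
        - (1/2) * (π * bb p (p-1) / (π - 1))^2)
      = (π-1)*(π * bb p (2*p-2)) - 2*(π-1)*(π*bb p (p-1)) - (π*bb p (p-1))^2 := by
    have h2π : 2*π - 2 = 2*(π-1) := by ring
    rw [h2π]
    field_simp
  have hmain : 2*(π-1)^2 * E
      = (2 - π) * π^2 * ((Q1 + (π-1)*W) * (Q1 - (π-1)*W)) + 2*(π-1)*π^3*(z₂ - z₁)
        + (π-1)*XC - 4*(π-1)*XA + XA*XA - 2*π*Q1*XA := by
    rw [hEdef, hW, mul_sub, hT2]
    linear_combination (2*(π-1))*hstar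
      + (2*(π-1) + (π * bb p (p-1)) + ((π-1) + π*Q1 - XA))*hβ + (-(π-1))*hδ
  -- norm bounds on the right-hand side
  have ht1 : ‖(2 - π) * π^2 * ((Q1 + (π-1)*W) * (Q1 - (π-1)*W))‖ ≤ pw p 3 := by
    have ha : ‖(2:ℚ_[p]) - π‖ ≤ 1 := norm_sub_le_max _ _ (le_of_eq h2norm) hπle
    have hb : ‖π^2‖ ≤ pw p 2 := by
      rw [norm_pow, hπn, pw_one_pow]
    have hc : ‖Q1 - (π-1)*W‖ ≤ 1 := by
      apply norm_sub_le_max _ _ hQ1n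
      rw [norm_mul, hn1norm, one_mul]
      exact hWn
    calc ‖(2 - π) * π^2 * ((Q1 + (π-1)*W) * (Q1 - (π-1)*W))‖
        ≤ (1 * pw p 2) * (pw p 1 * 1) :=
          norm_mul_le_le (norm_mul_le_le ha hb) (norm_mul_le_le hQ1Wn hc)
      _ = pw p 3 := by rw [one_mul, mul_one, ← pw_add]
  have ht2 : ‖2*(π-1)*π^3*(z₂ - z₁)‖ ≤ pw p 3 := by
    have ha : ‖(2:ℚ_[p])*(π-1)‖ ≤ 1 := by
      calc ‖(2:ℚ_[p])*(π-1)‖ ≤ 1*1 := norm_mul_le_le (le_of_eq h2norm) (le_of_eq hn1norm)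
        _ = 1 := by norm_num
    have hb : ‖π^3‖ ≤ pw p 3 := by rw [norm_pow, hπn, pw_one_pow]
    calc ‖2*(π-1)*π^3*(z₂ - z₁)‖ ≤ (1 * pw p 3) * 1 :=
          norm_mul_le_le (norm_mul_le_le ha hb) (norm_sub_le_max _ _ hz₂ hz₁)
      _ = pw p 3 := by rw [one_mul, mul_one]
  have ht3 : ‖(π-1)*XC‖ ≤ pw p 3 := by
    calc ‖(π-1)*XC‖ ≤ 1 * pw p 3 := norm_mul_le_le (le_of_eq hn1norm) hXC
      _ = pw p 3 := one_mul _
  have ht4 : ‖4*(π-1)*XA‖ ≤ pw p 3 := by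
    have h4 : ‖(4:ℚ_[p])‖ ≤ 1 := by
      have : ((4:ℚ_[p])) = (((4:ℤ)):ℚ_[p]) := by norm_num
      rw [this]
      exact norm_int_le_one' 4
    have ha : ‖(4:ℚ_[p])*(π-1)‖ ≤ 1 := by
      calc ‖(4:ℚ_[p])*(π-1)‖ ≤ 1*1 := norm_mul_le_le h4 (le_of_eq hn1norm)
        _ = 1 := by norm_num
    calc ‖4*(π-1)*XA‖ ≤ 1 * pw p 3 := norm_mul_le_le ha hXA
      _ = pw p 3 := one_mul _
  have ht5 : ‖XA*XA‖ ≤ pw p 3 := by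
    calc ‖XA*XA‖ ≤ pw p 3 * pw p 3 := norm_mul_le_le hXA hXA
      _ ≤ 1 * pw p 3 := by
          apply mul_le_mul_of_nonneg_right (pw_le_one 3) (pw_pos 3).le
      _ = pw p 3 := one_mul _
  have ht6 : ‖2*π*Q1*XA‖ ≤ pw p 3 := by
    have ha : ‖(2:ℚ_[p])*π*Q1‖ ≤ 1 := by
      calc ‖(2:ℚ_[p])*π*Q1‖ ≤ (1*1)*1 :=
            norm_mul_le_le (norm_mul_le_le (le_of_eq h2norm) hπle) hQ1n
        _ = 1 := by norm_num
    calc ‖2*π*Q1*XA‖ ≤ 1 * pw p 3 := norm_mul_le_le ha hXA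
      _ = pw p 3 := one_mul _
  have hRHSn : ‖2*(π-1)^2 * E‖ ≤ pw p 3 := by
    rw [hmain]
    apply norm_sub_le_max _ _ ?_ ht6
    apply norm_add_le_max _ _ ?_ ht5
    apply norm_sub_le_max _ _ ?_ ht4
    apply norm_add_le_max _ _ ?_ ht3
    exact norm_add_le_max _ _ ht1 ht2
  have hEn : ‖E‖ ≤ pw p 3 := by
    have h1 : ‖(2*(π-1)^2 : ℚ_[p])‖ = 1 := by
      rw [norm_mul, norm_pow, h2norm, hn1norm]
      norm_num
    calc ‖E‖ = ‖(2*(π-1)^2 : ℚ_[p])‖ * ‖E‖ := by rw [h1, one_mul]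
      _ = ‖2*(π-1)^2 * E‖ := (norm_mul _ _).symm
      _ ≤ pw p 3 := hRHSn
  -- conclude
  have hπ3ne : π^3 ≠ 0 := pow_ne_zero 3 hπne
  refine ⟨⟨E / π^3, ?_⟩, ?_⟩
  · show ‖E / π^3‖ ≤ 1
    rw [norm_div, norm_pow, hπn, pw_one_pow, div_le_one (pw_pos 3)]
    exact hEn
  · show E = π^3 * (E / π^3)
    rw [mul_div_cancel₀ _ hπ3ne]
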